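/- arXiv:1803.02165 — 2 statements merged into one kernel-verified Lean document; each statement's English description precedes it below -/
import Mathlib

section
/- Let K be a field, F(X,Y) ∈ K[X,Y] a polynomial of total degree d and K₀, L₀ ∈ K. Then δ(F(X − K₀, Y − L₀)) = δ(F(X,Y)); that is, the quantity δ(F) is invariant under translation of the variables. -/
open MvPolynomial

/-- `δ(F)`: the number of pairs `(k, ℓ)` such that `X^k Y^ℓ` divides some monomial
appearing in `F`. -/
noncomputable def deltaF {K : Type*} [Field K] (F : MvPolynomial (Fin 2) K) : ℕ :=
  Set.ncard {kl : ℕ × ℕ | ∃ m ∈ F.support, kl.1 ≤ m 0 ∧ kl.2 ≤ m 1}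

lemma degreeOf_sub_C_le {K : Type*} [Field K] (a : K) (i j : Fin 2) :
    MvPolynomial.degreeOf i ((X j : MvPolynomial (Fin 2) K) - MvPolynomial.C a)
      ≤ (Finsupp.single j 1 : Fin 2 →₀ ℕ) i := by
  rw [degreeOf_le_iff]
  intro m hm
  have := MvPolynomial.support_sub _ _ _ hm
  rw [Finset.mem_union] at this
  rcases this with h | h
  · rw [MvPolynomial.support_X] at h
    simp only [Finset.mem_singleton] at h
    subst h; exact le_rfl
  · rw [MvPolynomial.mem_support_iff, MvPolynomial.coeff_C] at h
    have : m = 0 := by by_contra hne; simp [Ne.symm hne] at h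
    subst this; simp

lemma key_lemma {K : Type*} [Field K] (a b : K) (F : MvPolynomial (Fin 2) K) :
    ∀ m ∈ (MvPolynomial.aeval
        ![(X 0 : MvPolynomial (Fin 2) K) - MvPolynomial.C a,
          (X 1 : MvPolynomial (Fin 2) K) - MvPolynomial.C b] F).support,
      ∃ n ∈ F.support, m 0 ≤ n 0 ∧ m 1 ≤ n 1 := by
  intro m hm
  set f : Fin 2 → MvPolynomial (Fin 2) K :=
    ![(X 0 : MvPolynomial (Fin 2) K) - MvPolynomial.C a,
      (X 1 : MvPolynomial (Fin 2) K) - MvPolynomial.C b] with hf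
  have hf0 : f 0 = (X 0 : MvPolynomial (Fin 2) K) - MvPolynomial.C a := rfl
  have hf1 : f 1 = (X 1 : MvPolynomial (Fin 2) K) - MvPolynomial.C b := rfl
  have d00 : MvPolynomial.degreeOf 0 (f 0) ≤ 1 := by
    rw [hf0]
    simpa using degreeOf_sub_C_le a 0 0
  have d01 : MvPolynomial.degreeOf 0 (f 1) ≤ 0 := by
    rw [hf1]
    simpa [Finsupp.single_eq_of_ne (by decide : (1:Fin 2) ≠ 0)] using degreeOf_sub_C_le b 0 1
  have d10 : MvPolynomial.degreeOf 1 (f 0) ≤ 0 := by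
    rw [hf0]
    simpa [Finsupp.single_eq_of_ne (by decide : (0:Fin 2) ≠ 1)] using degreeOf_sub_C_le a 1 0
  have d11 : MvPolynomial.degreeOf 1 (f 1) ≤ 1 := by
    rw [hf1]
    simpa using degreeOf_sub_C_le b 1 1
  rw [F.as_sum, map_sum] at hm
  have := MvPolynomial.support_sum hm
  rw [Finset.mem_biUnion] at this
  obtain ⟨n, hn, hmn⟩ := this
  have key : ∀ i : Fin 2,
      MvPolynomial.degreeOf i ((aeval f) (monomial n (coeff n F))) ≤ n i := by
    intro i
    rw [aeval_monomial, Finsupp.prod_fintype _ _ (fun i => pow_zero _), Fin.prod_univ_two]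
    calc MvPolynomial.degreeOf i
          ((algebraMap K (MvPolynomial (Fin 2) K)) (coeff n F) * (f 0 ^ n 0 * f 1 ^ n 1))
        ≤ MvPolynomial.degreeOf i (algebraMap K (MvPolynomial (Fin 2) K) (coeff n F))
          + MvPolynomial.degreeOf i (f 0 ^ n 0 * f 1 ^ n 1) := degreeOf_mul_le _ _ _
      _ ≤ 0 + (MvPolynomial.degreeOf i (f 0 ^ n 0) + MvPolynomial.degreeOf i (f 1 ^ n 1)) := by
          gcongr
          · exact le_of_eq (degreeOf_C _ _)
          · exact degreeOf_mul_le _ _ _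
      _ ≤ 0 + (n 0 * MvPolynomial.degreeOf i (f 0) + n 1 * MvPolynomial.degreeOf i (f 1)) := by
          gcongr <;> exact degreeOf_pow_le _ _ _
      _ ≤ n i := by
          fin_cases i <;> simp only [Fin.zero_eta, Fin.mk_one, zero_add]
          · calc n 0 * MvPolynomial.degreeOf 0 (f 0) + n 1 * MvPolynomial.degreeOf 0 (f 1)
                ≤ n 0 * 1 + n 1 * 0 := by gcongr
              _ = n 0 := by omega
          · calc n 0 * MvPolynomial.degreeOf 1 (f 0) + n 1 * MvPolynomial.degreeOf 1 (f 1)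
                ≤ n 0 * 0 + n 1 * 1 := by gcongr
              _ = n 1 := by omega
  refine ⟨n, hn, ?_, ?_⟩
  · exact le_trans (by rw [MvPolynomial.degreeOf_eq_sup]
                       exact Finset.le_sup (f := fun m => m 0) hmn) (key 0)
  · exact le_trans (by rw [MvPolynomial.degreeOf_eq_sup]
                       exact Finset.le_sup (f := fun m => m 1) hmn) (key 1)

lemma translate_comp {K : Type*} [Field K] (a b : K) (F : MvPolynomial (Fin 2) K) :
    (MvPolynomial.aeval
        ![(X 0 : MvPolynomial (Fin 2) K) - MvPolynomial.C (-a),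
          (X 1 : MvPolynomial (Fin 2) K) - MvPolynomial.C (-b)])
      ((MvPolynomial.aeval
        ![(X 0 : MvPolynomial (Fin 2) K) - MvPolynomial.C a,
          (X 1 : MvPolynomial (Fin 2) K) - MvPolynomial.C b]) F) = F := by
  show (bind₁ _) ((bind₁ _) F) = F
  rw [bind₁_bind₁]
  have : (fun i : Fin 2 => (bind₁ ![(X 0 : MvPolynomial (Fin 2) K) - MvPolynomial.C (-a),
          (X 1 : MvPolynomial (Fin 2) K) - MvPolynomial.C (-b)])
        (![(X 0 : MvPolynomial (Fin 2) K) - MvPolynomial.C a,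
          (X 1 : MvPolynomial (Fin 2) K) - MvPolynomial.C b] i)) = X := by
    funext i
    fin_cases i <;>
      simp only [Fin.isValue, Matrix.cons_val_zero, Matrix.cons_val_one, Matrix.head_cons,
        map_sub, bind₁_X_right, algHom_C, Fin.mk_zero, Fin.mk_one] <;>
      rw [map_neg] <;> simp [MvPolynomial.algebraMap_eq]
  rw [this, bind₁_X_left, AlgHom.id_apply]

/-- **Lemma (translation invariance of `δ`).**  For a field `K`, a polynomial
`F ∈ K[X,Y]` of total degree `d` and `K₀, L₀ ∈ K`, one has
`δ(F(X - K₀, Y - L₀)) = δ(F(X, Y))`. -/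
theorem deltaF_translation_invariant {K : Type*} [Field K]
    (F : MvPolynomial (Fin 2) K) (d : ℕ) (hdeg : F.totalDegree = d) (K₀ L₀ : K) :
    deltaF (MvPolynomial.aeval
        ![(X 0 : MvPolynomial (Fin 2) K) - MvPolynomial.C K₀,
          (X 1 : MvPolynomial (Fin 2) K) - MvPolynomial.C L₀] F)
      = deltaF F := by
  unfold deltaF
  congr 1
  ext ⟨k, l⟩
  simp only [Set.mem_setOf_eq]
  constructor
  · rintro ⟨m, hm, h1, h2⟩
    obtain ⟨n, hn, g1, g2⟩ := key_lemma K₀ L₀ F m hm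
    exact ⟨n, hn, h1.trans g1, h2.trans g2⟩
  · rintro ⟨m, hm, h1, h2⟩
    have := translate_comp K₀ L₀ F
    rw [← this] at hm
    obtain ⟨n, hn, g1, g2⟩ := key_lemma (-K₀) (-L₀) _ m hm
    exact ⟨n, hn, h1.trans g1, h2.trans g2⟩
end

section
/- Let K be an algebraically closed field, F(X,Y) ∈ K[X,Y] an irreducible polynomial of total degree d, and G(X,Y) ∈ K[X,Y] a nonzero polynomial of total degree at most d. If the number of common zeros of F and G in K², i.e. #{(x,y) ∈ K² : F(x,y) = G(x,y) = 0}, exceeds d², then F divides G in K[X,Y]. -/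
open MvPolynomial

section Aux
open Finsupp Finset
section T1


variable {K : Type*} [CommRing K] [IsDomain K] {σ : Type*}

theorem my_totalDegree_eq_sup_degree (p : MvPolynomial σ K) :
    p.totalDegree = p.support.sup Finsupp.degree := rfl

theorem my_degree_add (u v : σ →₀ ℕ) :
    Finsupp.degree (u + v) = Finsupp.degree u + Finsupp.degree v := by
  classical
  simp only [degree_eq_weight_one]
  exact map_add _ u v

theorem totalDegree_mul_eq' {p q : MvPolynomial σ K} (hp : p ≠ 0) (hq : q ≠ 0) :
    (p * q).totalDegree = p.totalDegree + q.totalDegree := by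
  classical
  refine le_antisymm (totalDegree_mul p q) ?_
  obtain ⟨mp, hmp, hmps⟩ := p.support.exists_mem_eq_sup (support_nonempty.mpr hp) Finsupp.degree
  obtain ⟨mq, hmq, hmqs⟩ := q.support.exists_mem_eq_sup (support_nonempty.mpr hq) Finsupp.degree
  have hpa : Finsupp.degree mp = p.totalDegree := by
    rw [my_totalDegree_eq_sup_degree, hmps]
  have hqb : Finsupp.degree mq = q.totalDegree := by
    rw [my_totalDegree_eq_sup_degree, hmqs]
  set a := p.totalDegree
  set b := q.totalDegree
  set Hp := homogeneousComponent a p with hHpdef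
  set Hq := homogeneousComponent b q with hHqdef
  have hHp : Hp ≠ 0 := by
    have hcoeff : coeff mp Hp = coeff mp p := by
      rw [hHpdef, coeff_homogeneousComponent, if_pos hpa]
    intro h
    exact (MvPolynomial.mem_support_iff.mp hmp) (by rw [← hcoeff, h, coeff_zero])
  have hHq : Hq ≠ 0 := by
    have hcoeff : coeff mq Hq = coeff mq q := by
      rw [hHqdef, coeff_homogeneousComponent, if_pos hqb]
    intro h
    exact (MvPolynomial.mem_support_iff.mp hmq) (by rw [← hcoeff, h, coeff_zero])
  have hmulH : Hp * Hq ≠ 0 := mul_ne_zero hHp hHq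
  have hhom : (Hp * Hq).IsHomogeneous (a + b) :=
    (homogeneousComponent_isHomogeneous a p).mul (homogeneousComponent_isHomogeneous b q)
  obtain ⟨m, hm⟩ := ne_zero_iff.mp hmulH
  have hmdeg : Finsupp.degree m = a + b := by
    have := hhom hm
    rw [degree_eq_weight_one]; exact this
  have hcongr : coeff m (p * q) = coeff m (Hp * Hq) := by
    rw [coeff_mul, coeff_mul]
    refine Finset.sum_congr rfl ?_
    rintro ⟨u, v⟩ huv
    have huvm : u + v = m := Finset.HasAntidiagonal.mem_antidiagonal.mp huv
    have hdadd : Finsupp.degree u + Finsupp.degree v = a + b := by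
      rw [← my_degree_add, huvm, hmdeg]
    simp only [hHpdef, hHqdef, coeff_homogeneousComponent]
    rcases eq_or_ne (Finsupp.degree u) a with hu | hu
    · have hv : Finsupp.degree v = b := by omega
      rw [if_pos hu, if_pos hv]
    · rcases lt_or_gt_of_ne hu with hlt | hgt
      · have hv : b < Finsupp.degree v := by omega
        have : coeff v q = 0 := coeff_eq_zero_of_totalDegree_lt hv
        rw [if_neg hu, this, mul_zero, zero_mul]
      · have : coeff u p = 0 := coeff_eq_zero_of_totalDegree_lt hgt
        rw [if_neg hu, this, zero_mul, zero_mul]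
  have hmem : m ∈ (p * q).support := by
    rw [MvPolynomial.mem_support_iff, hcongr]; exact hm
  have := le_totalDegree hmem
  calc a + b = Finsupp.degree m := hmdeg.symm
    _ ≤ (p * q).totalDegree := le_totalDegree hmem
end T1



/-- `Nbz s` = number of monomials in two variables of total degree ≤ s. -/
def Nbz (s : ℕ) : ℕ := ∑ k ∈ range (s + 1), (k + 1)

lemma Nbz_two : ∀ s, 2 * Nbz s = (s + 1) * (s + 2) := by
  intro s
  induction s with
  | zero => simp [Nbz]
  | succ n ih =>
    rw [Nbz, Finset.sum_range_succ, ← Nbz, Nat.mul_add, ih]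
    ring

/-- The key numeric identity. -/
lemma Nbz_identity (d e t : ℕ) :
    Nbz (d + e + t) + Nbz t = Nbz (e + t) + Nbz (d + t) + d * e := by
  have h2 : 2 * (Nbz (d + e + t) + Nbz t) = 2 * (Nbz (e + t) + Nbz (d + t) + d * e) := by
    rw [Nat.mul_add, Nat.mul_add, Nat.mul_add, Nbz_two, Nbz_two, Nbz_two, Nbz_two]
    ring
  omega

/-- The finset of pairs with sum ≤ s. -/
def Tbz (s : ℕ) : Finset (ℕ × ℕ) := (range (s + 1)).biUnion Finset.HasAntidiagonal.antidiagonal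

lemma mem_Tbz {s : ℕ} {x : ℕ × ℕ} : x ∈ Tbz s ↔ x.1 + x.2 ≤ s := by
  simp only [Tbz, Finset.mem_biUnion, Finset.mem_range, Finset.HasAntidiagonal.mem_antidiagonal]
  constructor
  · rintro ⟨k, hk, rfl⟩; omega
  · intro h; exact ⟨x.1 + x.2, by omega, rfl⟩

lemma card_Tbz (s : ℕ) : (Tbz s).card = Nbz s := by
  rw [Tbz, Finset.card_biUnion, Nbz]
  · exact Finset.sum_congr rfl fun k _ => Nat.card_antidiagonal k
  · intro i _ j _ hij
    simp only [Finset.disjoint_left, Finset.HasAntidiagonal.mem_antidiagonal]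
    rintro a h1 h2; exact hij (h1.symm.trans h2)

lemma my_degsum (n : Fin 2 →₀ ℕ) : (n.sum fun _ e => e) = n 0 + n 1 := by
  rw [Finsupp.sum_fintype _ _ (fun _ => rfl)]
  exact Fin.sum_univ_two _

/-- Equivalence between bounded-degree exponents and the pair finset. -/
noncomputable def bzEquiv (s : ℕ) :
    {n : Fin 2 →₀ ℕ | (n.sum fun _ e => e) ≤ s} ≃ {x : ℕ × ℕ // x ∈ Tbz s} where
  toFun n := ⟨(n.1 0, n.1 1), by rw [mem_Tbz]; have := n.2; rwa [Set.mem_setOf_eq, my_degsum] at this⟩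
  invFun x := ⟨Finsupp.equivFunOnFinite.symm ![x.1.1, x.1.2], by
    have := mem_Tbz.mp x.2
    rw [Set.mem_setOf_eq, my_degsum]
    simpa using this⟩
  left_inv n := by
    ext i
    simp only [Finsupp.coe_equivFunOnFinite_symm]
    fin_cases i <;> simp
  right_inv x := by
    ext <;> simp

section T2
variable {K : Type*} [Field K]

lemma finrank_restrictTotalDegree (s : ℕ) :
    Module.finrank K (restrictTotalDegree (Fin 2) K s) = Nbz s := by
  classical
  haveI : Fintype {n : Fin 2 →₀ ℕ | (n.sum fun _ e => e) ≤ s} :=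
    Fintype.ofEquiv _ (bzEquiv s).symm
  have b : Module.Basis {n : Fin 2 →₀ ℕ | (n.sum fun _ e => e) ≤ s} K
      (restrictTotalDegree (Fin 2) K s) :=
    MvPolynomial.basisRestrictSupport K _
  rw [Module.finrank_eq_card_basis b, Fintype.card_congr (bzEquiv s),
    Fintype.card_coe, card_Tbz]
end T2



variable {K : Type*} [Field K]

lemma my_aeval_eq_eval (v : Fin 2 → K) (p : MvPolynomial (Fin 2) K) :
    aeval v p = eval v p := by
  rw [aeval_def, ← eval₂_id]
  rw [Algebra.algebraMap_self]

lemma my_totalDegree_lin (i : Fin 2) (a : K) :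
    (X i - C a : MvPolynomial (Fin 2) K).totalDegree ≤ 1 := by
  rw [sub_eq_add_neg, ← C_neg]
  refine le_trans (totalDegree_add _ _) ?_
  simp [totalDegree_X, totalDegree_C]

/-- Interpolation: a polynomial of low degree which is `1` at `p0 ∈ S` and `0` elsewhere on `S`. -/
lemma my_interp (S : Finset (K × K)) (p0 : K × K) (hp0 : p0 ∈ S) :
    ∃ u : MvPolynomial (Fin 2) K, u.totalDegree ≤ S.card ∧
      eval ![p0.1, p0.2] u = 1 ∧ ∀ q ∈ S, q ≠ p0 → eval ![q.1, q.2] u = 0 := by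
  classical
  set L : K × K → MvPolynomial (Fin 2) K :=
    fun q => if q.1 ≠ p0.1 then (X 0 - C q.1) else (X 1 - C q.2) with hL
  have hLdeg : ∀ q, (L q).totalDegree ≤ 1 := by
    intro q
    simp only [hL]
    split <;> exact my_totalDegree_lin _ _
  have hLq : ∀ q ∈ S.erase p0, eval ![q.1, q.2] (L q) = 0 := by
    intro q hq
    simp only [hL]
    split
    · simp
    · simp
  have hLp0 : ∀ q ∈ S.erase p0, eval ![p0.1, p0.2] (L q) ≠ 0 := by
    intro q hq
    have hqne : q ≠ p0 := Finset.ne_of_mem_erase hq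
    simp only [hL]
    split
    · rename_i h
      simpa [sub_eq_zero] using fun hh => h hh.symm
    · rename_i h
      push_neg at h
      have h2 : q.2 ≠ p0.2 := fun h2 => hqne (Prod.ext h h2)
      simpa [sub_eq_zero] using fun hh => h2 hh.symm
  set u0 : MvPolynomial (Fin 2) K := ∏ q ∈ S.erase p0, L q with hu0
  have hu0deg : u0.totalDegree ≤ S.card := by
    refine le_trans (totalDegree_finset_prod _ _) ?_
    refine le_trans (Finset.sum_le_sum fun q _ => hLdeg q) ?_
    simp only [Finset.sum_const, smul_eq_mul, mul_one]
    exact le_trans (Finset.card_erase_le) le_rfl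
  have hc : eval ![p0.1, p0.2] u0 ≠ 0 := by
    rw [hu0, map_prod]
    exact Finset.prod_ne_zero_iff.mpr hLp0
  refine ⟨C (eval ![p0.1, p0.2] u0)⁻¹ * u0, ?_, ?_, ?_⟩
  · refine le_trans (totalDegree_mul _ _) ?_
    simpa [totalDegree_C] using hu0deg
  · rw [map_mul, eval_C, inv_mul_cancel₀ hc]
  · intro q hq hqne
    rw [map_mul]
    have : eval ![q.1, q.2] u0 = 0 := by
      rw [hu0, map_prod]
      exact Finset.prod_eq_zero (Finset.mem_erase.mpr ⟨hqne, hq⟩) (hLq q (Finset.mem_erase.mpr ⟨hqne, hq⟩))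
    rw [this, mul_zero]

set_option maxHeartbeats 2000000 in
theorem bezout_bound (F G : MvPolynomial (Fin 2) K) (hFp : Prime F) (hG : G ≠ 0)
    (hndvd : ¬ F ∣ G) (S : Finset (K × K))
    (hS : ∀ p ∈ S, eval ![p.1, p.2] F = 0 ∧ eval ![p.1, p.2] G = 0) :
    S.card ≤ F.totalDegree * G.totalDegree := by
  classical
  have hF0 : F ≠ 0 := hFp.ne_zero
  set d := F.totalDegree with hd
  set e := G.totalDegree with he
  set n := S.card with hn
  set s := d + e + n with hs
  set V : ℕ → Submodule K (MvPolynomial (Fin 2) K) :=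
    fun m => restrictTotalDegree (Fin 2) K m with hV
  -- the map (a, b) ↦ a * F + b * G
  set φ₀ : (↥(V (e + n)) × ↥(V (d + n))) →ₗ[K] MvPolynomial (Fin 2) K :=
    ((LinearMap.mulRight K F).comp ((V (e + n)).subtype.comp
        (LinearMap.fst K ↥(V (e + n)) ↥(V (d + n))))) +
    ((LinearMap.mulRight K G).comp ((V (d + n)).subtype.comp
        (LinearMap.snd K ↥(V (e + n)) ↥(V (d + n))))) with hφ₀
  have hφ₀app : ∀ ab, φ₀ ab = ↑ab.1 * F + ↑ab.2 * G := fun _ => rfl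
  have hφmem : ∀ ab, φ₀ ab ∈ V s := by
    intro ab
    rw [hφ₀app]
    simp only [hV, mem_restrictTotalDegree]
    have h1 : (↑ab.1 * F : MvPolynomial (Fin 2) K).totalDegree ≤ s := by
      refine le_trans (totalDegree_mul _ _) ?_
      have := (mem_restrictTotalDegree _ _ _).mp ab.1.2
      omega
    have h2 : (↑ab.2 * G : MvPolynomial (Fin 2) K).totalDegree ≤ s := by
      refine le_trans (totalDegree_mul _ _) ?_
      have := (mem_restrictTotalDegree _ _ _).mp ab.2.2
      omega
    exact le_trans (totalDegree_add _ _) (max_le h1 h2)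
  set φ : (↥(V (e + n)) × ↥(V (d + n))) →ₗ[K] ↥(V s) := φ₀.codRestrict (V s) hφmem with hφ
  -- the map c ↦ (-(c * G), c * F)
  have hΨmem1 : ∀ c : ↥(V n), -((c : MvPolynomial (Fin 2) K) * G) ∈ V (e + n) := by
    intro c
    simp only [hV, mem_restrictTotalDegree, totalDegree_neg]
    refine le_trans (totalDegree_mul _ _) ?_
    have := (mem_restrictTotalDegree _ _ _).mp c.2
    omega
  have hΨmem2 : ∀ c : ↥(V n), (c : MvPolynomial (Fin 2) K) * F ∈ V (d + n) := by
    intro c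
    simp only [hV, mem_restrictTotalDegree]
    refine le_trans (totalDegree_mul _ _) ?_
    have := (mem_restrictTotalDegree _ _ _).mp c.2
    omega
  set Ψ : ↥(V n) →ₗ[K] (↥(V (e + n)) × ↥(V (d + n))) :=
    LinearMap.prod
      (((-(LinearMap.mulRight K G)).comp (V n).subtype).codRestrict (V (e + n)) hΨmem1)
      (((LinearMap.mulRight K F).comp (V n).subtype).codRestrict (V (d + n)) hΨmem2) with hΨ
  -- kernel of φ is inside range of Ψ
  have hker : LinearMap.ker φ ≤ LinearMap.range Ψ := by
    rintro ⟨a, b⟩ hab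
    rw [LinearMap.mem_ker, hφ] at hab
    have heq : (a : MvPolynomial (Fin 2) K) * F + ↑b * G = 0 := by
      have : φ₀ (a, b) = 0 := by
        have := congrArg (Subtype.val) hab
        simpa using this
      rwa [hφ₀app] at this
    have hdvd : F ∣ (b : MvPolynomial (Fin 2) K) * G := by
      refine ⟨-(a : MvPolynomial (Fin 2) K), ?_⟩
      linear_combination heq
    obtain ⟨c, hc⟩ := (hFp.2.2 _ _ hdvd).resolve_right hndvd
    have hcdeg : c.totalDegree ≤ n := by
      rcases eq_or_ne c 0 with rfl | hc0
      · simp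
      · have hb0 : (b : MvPolynomial (Fin 2) K) ≠ 0 := by
          rw [hc]; exact mul_ne_zero hF0 hc0
        have : (b : MvPolynomial (Fin 2) K).totalDegree = d + c.totalDegree := by
          rw [hc, totalDegree_mul_eq' hF0 hc0, hd]
        have hble := (mem_restrictTotalDegree _ _ _).mp b.2
        omega
    have ha : (a : MvPolynomial (Fin 2) K) = -(c * G) := by
      have hfa : F * (a : MvPolynomial (Fin 2) K) = F * (-(c * G)) := by
        rw [hc] at heq
        linear_combination heq
      exact mul_left_cancel₀ hF0 hfa
    refine ⟨⟨c, (mem_restrictTotalDegree _ _ _).mpr hcdeg⟩, ?_⟩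
    rw [hΨ]
    refine Prod.ext (Subtype.ext ?_) (Subtype.ext ?_)
    · simpa using ha.symm
    · show c * F = (b : MvPolynomial (Fin 2) K)
      exact (by rw [hc, mul_comm] : (b : MvPolynomial (Fin 2) K) = c * F).symm
  -- evaluation map
  set ev : ↥(V s) →ₗ[K] (↥S → K) :=
    LinearMap.pi (fun q => (aeval ![(q : K × K).1, (q : K × K).2]).toLinearMap.comp
      (V s).subtype) with hev
  have hevapp : ∀ (p : ↥(V s)) (q : ↥S),
      ev p q = eval ![(q : K × K).1, (q : K × K).2] (p : MvPolynomial (Fin 2) K) := by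
    intro p q
    rw [hev]
    simp [LinearMap.pi_apply, my_aeval_eq_eval]
  -- range φ ≤ ker ev
  have hrange_ker : LinearMap.range φ ≤ LinearMap.ker ev := by
    rintro x ⟨ab, rfl⟩
    rw [LinearMap.mem_ker]
    funext q
    have hq := hS q q.2
    rw [hevapp]
    have : ((φ ab : ↥(V s)) : MvPolynomial (Fin 2) K) = ↑ab.1 * F + ↑ab.2 * G := by
      rw [hφ]; simpa using hφ₀app ab
    rw [this, map_add, map_mul, map_mul, hq.1, hq.2, mul_zero, mul_zero, add_zero]
    rfl
  -- ev is surjective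
  have hev_surj : Function.Surjective ev := by
    rw [← LinearMap.range_eq_top]
    rw [eq_top_iff, ← (Pi.basisFun K ↥S).span_eq]
    refine Submodule.span_le.mpr ?_
    rintro _ ⟨q0, rfl⟩
    rw [Pi.basisFun_apply]
    obtain ⟨u, hudeg, hu1, hu0⟩ := my_interp S ↑q0 q0.2
    have humem : u ∈ V s := by
      simp only [hV, mem_restrictTotalDegree]; omega
    refine ⟨⟨u, humem⟩, ?_⟩
    funext q
    rw [hevapp]
    rcases eq_or_ne q q0 with rfl | hne
    · simpa using hu1
    · have : (q : K × K) ≠ ↑q0 := fun h => hne (Subtype.ext h)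
      rw [hu0 _ q.2 this]
      simp [Pi.single_apply, hne]
  -- now the dimension count
  haveI : Module.Finite K ↥(V s) := by rw [hV]; infer_instance
  haveI : Module.Finite K ↥(V n) := by rw [hV]; infer_instance
  haveI : Module.Finite K ↥(V (e + n)) := by rw [hV]; infer_instance
  haveI : Module.Finite K ↥(V (d + n)) := by rw [hV]; infer_instance
  have hdim_s : Module.finrank K ↥(V s) = Nbz s := finrank_restrictTotalDegree s
  have hdim_n : Module.finrank K ↥(V n) = Nbz n := finrank_restrictTotalDegree n
  have hdim_en : Module.finrank K ↥(V (e + n)) = Nbz (e + n) := finrank_restrictTotalDegree _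
  have hdim_dn : Module.finrank K ↥(V (d + n)) = Nbz (d + n) := finrank_restrictTotalDegree _
  -- rank-nullity for ev
  have hev_rn := LinearMap.finrank_range_add_finrank_ker ev
  have hev_range : Module.finrank K ↥(LinearMap.range ev) = n := by
    rw [LinearMap.range_eq_top.mpr hev_surj]
    rw [finrank_top, Module.finrank_fintype_fun_eq_card, Fintype.card_coe]
  -- rank-nullity for φ
  have hφ_rn := LinearMap.finrank_range_add_finrank_ker φ
  have hdom : Module.finrank K (↥(V (e + n)) × ↥(V (d + n))) = Nbz (e + n) + Nbz (d + n) := by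
    rw [Module.finrank_prod, hdim_en, hdim_dn]
  have hker_le : Module.finrank K ↥(LinearMap.ker φ) ≤ Nbz n := by
    refine le_trans (Submodule.finrank_mono hker) ?_
    refine le_trans (LinearMap.finrank_range_le Ψ) ?_
    rw [hdim_n]
  have hrange_le : Module.finrank K ↥(LinearMap.range φ) ≤
      Module.finrank K ↥(LinearMap.ker ev) := Submodule.finrank_mono hrange_ker
  -- put everything together
  have hNid := Nbz_identity d e n
  have hdim_s' : Module.finrank K ↥(V s) = Nbz (d + e + n) := hdim_s
  have key : n + (Nbz (e + n) + Nbz (d + n)) ≤ Nbz (d + e + n) + Nbz n := by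
    calc n + (Nbz (e + n) + Nbz (d + n))
        = n + Module.finrank K (↥(V (e + n)) × ↥(V (d + n))) := by rw [hdom]
      _ = n + (Module.finrank K ↥(LinearMap.range φ) +
            Module.finrank K ↥(LinearMap.ker φ)) := by rw [hφ_rn]
      _ ≤ n + (Module.finrank K ↥(LinearMap.ker ev) + Nbz n) :=
          Nat.add_le_add_left (Nat.add_le_add hrange_le hker_le) n
      _ = (Module.finrank K ↥(LinearMap.range ev) +
            Module.finrank K ↥(LinearMap.ker ev)) + Nbz n := by rw [hev_range]; ring
      _ = Module.finrank K ↥(V s) + Nbz n := by rw [hev_rn]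
      _ = Nbz (d + e + n) + Nbz n := by rw [hdim_s']
  clear_value d e n s
  omega
end Aux

/-- **Lemma (a Bézout-type consequence).**  Let `K` be an algebraically closed field,
`F ∈ K[X,Y]` irreducible of total degree `d`, and `G ∈ K[X,Y]` nonzero of total degree at
most `d`.  If `F` and `G` have more than `d²` common zeros in `K²`, then `F ∣ G`. -/

theorem irreducible_dvd_of_many_common_zeros {K : Type*} [Field K] [IsAlgClosed K]
    (F G : MvPolynomial (Fin 2) K) (d : ℕ)
    (hF : Irreducible F) (hdF : F.totalDegree = d)
    (hG : G ≠ 0) (hdG : G.totalDegree ≤ d)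
    (hcount : ((d : ℕ∞) ^ 2) <
      {xy : K × K | MvPolynomial.eval ![xy.1, xy.2] F = 0 ∧
        MvPolynomial.eval ![xy.1, xy.2] G = 0}.encard) :
    F ∣ G := by
  by_contra hndvd
  have hFp : Prime F := UniqueFactorizationMonoid.irreducible_iff_prime.mp hF
  set Z := {xy : K × K | MvPolynomial.eval ![xy.1, xy.2] F = 0 ∧
        MvPolynomial.eval ![xy.1, xy.2] G = 0} with hZ
  have hle : ((d ^ 2 + 1 : ℕ) : ℕ∞) ≤ Z.encard := by
    have hcast : ((d : ℕ∞) ^ 2) = ((d ^ 2 : ℕ) : ℕ∞) := by push_cast; ring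
    rw [hcast] at hcount
    have := Order.add_one_le_of_lt hcount
    refine le_trans (le_of_eq ?_) this
    push_cast
    ring
  obtain ⟨t, htZ, htcard⟩ := Set.exists_subset_encard_eq hle
  have htfin : t.Finite := Set.finite_of_encard_eq_coe htcard
  have hScard : htfin.toFinset.card = d ^ 2 + 1 := by
    have h2 := htfin.encard_eq_coe_toFinset_card
    rw [htcard] at h2
    exact_mod_cast h2.symm
  have hS : ∀ p ∈ htfin.toFinset, eval ![p.1, p.2] F = 0 ∧ eval ![p.1, p.2] G = 0 := by
    intro p hp
    exact htZ (htfin.mem_toFinset.mp hp)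
  have hbound := bezout_bound F G hFp hG hndvd htfin.toFinset hS
  rw [hdF] at hbound
  have hdd : htfin.toFinset.card ≤ d * d :=
    le_trans hbound (Nat.mul_le_mul_left d hdG)
  have hsq : d ^ 2 = d * d := sq d
  omega
end
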